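/- Let E be a real normed vector space and N a smooth (1,1) tensor field on E with vanishing Nijenhuis torsion, T(N) = 0. Let M_i, M_j, A_i, A_j, M_{i+1}, M_{j+1} be smooth (1,1) tensor fields on E satisfying M_{i+1} = N M_i + A_i and M_{j+1} = N M_j + A_j (pointwise compositions and sums). Then for every vector field X on E: [M_{i+1}, M_{j+1}]_X = −N²[M_i, M_j]_X + N( [M_{i+1}, M_j]_X − [M_{j+1}, M_i]_X − [A_i, M_j]_X + [A_j, M_i]_X ) + [M_{i+1}, A_j]_X − [M_{j+1}, A_i]_X − [A_i, A_j]_X. -/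

import Mathlib

variable {E : Type*} [NormedAddCommGroup E] [NormedSpace ℝ E]

/-- Lie bracket of vector fields on `E`: `[X,Y](x) = DY(x)(X(x)) − DX(x)(Y(x))`. -/
noncomputable def lie (X Y : E → E) : E → E :=
  fun x => fderiv ℝ Y x (X x) - fderiv ℝ X x (Y x)

/-- Pointwise action of a (1,1) tensor field on a vector field. -/
def app (N : E → E →L[ℝ] E) (X : E → E) : E → E := fun x => N x (X x)

/-- Pointwise `k`-th power of a (1,1) tensor field. -/
def pw (N : E → E →L[ℝ] E) (k : ℕ) : E → E →L[ℝ] E := fun x => (N x) ^ k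

/-- Frölicher–Nijenhuis bracket of two (1,1) tensor fields, evaluated on vector fields. -/
noncomputable def fnBracket (N₁ N₂ : E → E →L[ℝ] E) (X Y : E → E) : E → E :=
  fun x =>
    N₁ x (N₂ x (lie X Y x)) + N₂ x (N₁ x (lie X Y x))
      + lie (app N₁ X) (app N₂ Y) x + lie (app N₂ X) (app N₁ Y) x
      - N₁ x (lie (app N₂ X) Y x + lie X (app N₂ Y) x)
      - N₂ x (lie (app N₁ X) Y x + lie X (app N₁ Y) x)

/-- Nijenhuis torsion of a (1,1) tensor field, evaluated on vector fields. -/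
noncomputable def tor (N : E → E →L[ℝ] E) (X Y : E → E) : E → E :=
  fun x =>
    lie (app N X) (app N Y) x
      + N x (N x (lie X Y x) - lie (app N X) Y x - lie X (app N Y) x)

/-- Haantjes tensor of a (1,1) tensor field, evaluated on vector fields. -/
noncomputable def haan (M : E → E →L[ℝ] E) (X Y : E → E) : E → E :=
  fun x =>
    M x (M x (tor M X Y x)) + tor M (app M X) (app M Y) x
      - M x (tor M (app M X) Y x + tor M X (app M Y) x)

/-- The bracket `[A,B]_X = [AX,BX] − A[X,BX] + B[X,AX]` of two (1,1) tensor fields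
with respect to a vector field `X`. -/
noncomputable def brX (A B : E → E →L[ℝ] E) (X : E → E) : E → E :=
  fun x =>
    lie (app A X) (app B X) x - A x (lie X (app B X) x) + B x (lie X (app A X) x)

/-- A 1-form is closed iff its Fréchet derivative is symmetric. -/
def IsClosedOneForm (ρ : E → E →L[ℝ] ℝ) : Prop :=
  ∀ x u v, fderiv ℝ ρ x u v = fderiv ℝ ρ x v u

theorem stmt10 (N : E → E →L[ℝ] E) (hN : ContDiff ℝ (⊤ : ℕ∞) N)
    (hT : ∀ X Y : E → E, ContDiff ℝ (⊤ : ℕ∞) X → ContDiff ℝ (⊤ : ℕ∞) Y →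
      ∀ x, tor N X Y x = 0)
    (Mi Mj Ai Aj Mi' Mj' : E → E →L[ℝ] E)
    (hMi : ContDiff ℝ (⊤ : ℕ∞) Mi) (hMj : ContDiff ℝ (⊤ : ℕ∞) Mj)
    (hAi : ContDiff ℝ (⊤ : ℕ∞) Ai) (hAj : ContDiff ℝ (⊤ : ℕ∞) Aj)
    (hMi' : ∀ x, Mi' x = (N x).comp (Mi x) + Ai x)
    (hMj' : ∀ x, Mj' x = (N x).comp (Mj x) + Aj x)
    (X : E → E) (hX : ContDiff ℝ (⊤ : ℕ∞) X) (x : E) :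
    brX Mi' Mj' X x
      = -(N x (N x (brX Mi Mj X x)))
        + N x (brX Mi' Mj X x - brX Mj' Mi X x - brX Ai Mj X x + brX Aj Mi X x)
        + brX Mi' Aj X x - brX Mj' Ai X x - brX Ai Aj X x := by
  have hMieq : Mi' = fun y => (N y).comp (Mi y) + Ai y := funext hMi'
  have hMjeq : Mj' = fun y => (N y).comp (Mj y) + Aj y := funext hMj'
  subst hMieq hMjeq
  have hXa : ContDiff ℝ (⊤ : ℕ∞) (app Mi X) := hMi.clm_apply hX
  have hXb : ContDiff ℝ (⊤ : ℕ∞) (app Mj X) := hMj.clm_apply hX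
  have hna : ContDiff ℝ (⊤ : ℕ∞) (app N (app Mi X)) := hN.clm_apply hXa
  have hnb : ContDiff ℝ (⊤ : ℕ∞) (app N (app Mj X)) := hN.clm_apply hXb
  have hai : ContDiff ℝ (⊤ : ℕ∞) (app Ai X) := hAi.clm_apply hX
  have haj : ContDiff ℝ (⊤ : ℕ∞) (app Aj X) := hAj.clm_apply hX
  have dna : DifferentiableAt ℝ (app N (app Mi X)) x :=
    (hna.differentiable (by simp)).differentiableAt
  have dnb : DifferentiableAt ℝ (app N (app Mj X)) x :=
    (hnb.differentiable (by simp)).differentiableAt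
  have dai : DifferentiableAt ℝ (app Ai X) x :=
    (hai.differentiable (by simp)).differentiableAt
  have daj : DifferentiableAt ℝ (app Aj X) x :=
    (haj.differentiable (by simp)).differentiableAt
  have h1 : app (fun y => (N y).comp (Mi y) + Ai y) X
      = fun y => app N (app Mi X) y + app Ai X y := by
    funext y; simp [app]
  have h2 : app (fun y => (N y).comp (Mj y) + Aj y) X
      = fun y => app N (app Mj X) y + app Aj X y := by
    funext y; simp [app]
  have htor := hT (app Mi X) (app Mj X) hXa hXb x
  simp only [tor, lie, map_sub, map_add] at htor
  simp only [brX, h1, h2, lie]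
  rw [fderiv_fun_add dna dai, fderiv_fun_add dnb daj]
  simp only [ContinuousLinearMap.add_apply, ContinuousLinearMap.comp_apply,
    map_add, map_sub]
  rw [← sub_eq_zero, ← htor]
  abel
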